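/- Let f : ℝⁿ → ℝ ∪ {+∞} be proper and prox-bounded with constant c > 0, i.e. the function x ↦ f(x) + ‖x‖²/(2c) is bounded below. Then for every r ∈ (0, c), the Moreau envelope e_r f has the descent property on ℝⁿ with constant L = 1/r: e_r f(y) ≤ e_r f(x) + d(e_r f)(x)(y − x) + (1/(2r))‖y − x‖² for all x, y ∈ ℝⁿ. -/

import Mathlib

open Filter Topology Set

/-- The subderivative `df(x̄)(w) := liminf_{t↓0, w'→w} (f(x̄ + t w') − f(x̄))/t`
of an extended-real-valued function. -/
noncomputable def subderiv {n : ℕ} (f : EuclideanSpace ℝ (Fin n) → EReal)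
    (x w : EuclideanSpace ℝ (Fin n)) : EReal :=
  Filter.liminf
    (fun p : ℝ × EuclideanSpace ℝ (Fin n) =>
      (((p.1)⁻¹ : ℝ) : EReal) * (f (x + p.1 • p.2) - f x))
    ((𝓝[>] (0:ℝ)) ×ˢ 𝓝 w)

/-- `F` is semi-differentiable at `x` for the direction `w` with semi-derivative `d`:
`d = lim_{t↓0, w'→w} (F(x + t w') − F(x))/t`. -/
def HasSemiderivAt {E V : Type*} [NormedAddCommGroup E] [NormedSpace ℝ E]
    [NormedAddCommGroup V] [NormedSpace ℝ V]
    (F : E → V) (x w : E) (d : V) : Prop :=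
  Filter.Tendsto (fun p : ℝ × E => (p.1)⁻¹ • (F (x + p.1 • p.2) - F x))
    ((𝓝[>] (0:ℝ)) ×ˢ 𝓝 w) (𝓝 d)

/-- The Moreau envelope `e_r f(x) = inf_y { ‖x − y‖²/(2r) + f(y) }`. -/
noncomputable def moreauEnv {n : ℕ} (f : EuclideanSpace ℝ (Fin n) → EReal) (r : ℝ)
    (x : EuclideanSpace ℝ (Fin n)) : EReal :=
  ⨅ y : EuclideanSpace ℝ (Fin n), (((‖x - y‖ ^ 2 / (2 * r) : ℝ) : EReal) + f y)

private lemma norm_combo {V : Type*} [NormedAddCommGroup V] [InnerProductSpace ℝ V]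
    (a b : V) (t : ℝ) :
    ‖a + t•(b-a)‖^2 = (1-t)*‖a‖^2 + t*‖b‖^2 - t*(1-t)*‖b-a‖^2 := by
  simp only [← real_inner_self_eq_norm_sq, inner_add_left, inner_add_right, inner_sub_left,
    inner_sub_right, inner_smul_left, inner_smul_right, real_inner_comm a b, starRingEnd_apply,
    star_trivial]
  ring

set_option maxHeartbeats 1000000 in
/-- if `f` is proper and prox-bounded with constant `c > 0`, then for
every `r ∈ (0, c)` the Moreau envelope `e_r f` has the descent property on `ℝⁿ` with
constant `1/r`. -/
theorem moreau_envelope_descent_property {n : ℕ}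
    (f : EuclideanSpace ℝ (Fin n) → EReal)
    -- `f` is proper, with values in ℝ ∪ {+∞}
    (hf_ne_bot : ∀ z, f z ≠ ⊥) (hproper : ∃ z, f z ≠ ⊤)
    (c : ℝ) (hc : 0 < c)
    -- `f` is prox-bounded with constant `c`: `x ↦ f(x) + ‖x‖²/(2c)` is bounded below
    (hpb : ∃ b : ℝ, ∀ z, (b : EReal) ≤ f z + ((‖z‖ ^ 2 / (2 * c) : ℝ) : EReal)) :
    ∀ r : ℝ, 0 < r → r < c →
      ∀ x y : EuclideanSpace ℝ (Fin n),
        moreauEnv f r y ≤ moreauEnv f r x + subderiv (moreauEnv f r) x (y - x) +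
          (((1 / (2 * r)) * ‖y - x‖ ^ 2 : ℝ) : EReal) := by
  intro r hr hrc x y
  obtain ⟨z, hz⟩ := hproper
  obtain ⟨b, hb⟩ := hpb
  set e := moreauEnv f r with he_def
  have hle : ∀ u v, e u ≤ ((‖u - v‖ ^ 2 / (2 * r) : ℝ) : EReal) + f v := by
    intro u v
    rw [he_def]; unfold moreauEnv
    exact iInf_le _ v
  set A : ℝ := 1 / (2 * r) with hA
  set B : ℝ := 1 / (2 * c) with hB
  have hABpos : 0 < A - B := by
    rw [hA, hB, sub_pos]
    apply one_div_lt_one_div_of_lt <;> linarith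
  -- lower bound on the envelope
  have key : ∀ u v, ((b + A*‖u‖^2 - (A*‖u‖)^2/(A-B) : ℝ) : EReal)
      ≤ ((‖u - v‖ ^ 2 / (2 * r) : ℝ) : EReal) + f v := by
    intro u v
    rcases eq_or_ne (f v) ⊤ with hv | hv
    · rw [hv, EReal.add_top_of_ne_bot (EReal.coe_ne_bot _)]; exact le_top
    · rw [← EReal.coe_toReal hv (hf_ne_bot v), ← EReal.coe_add, EReal.coe_le_coe_iff]
      set s := (f v).toReal with hs
      have hbv := hb v
      rw [← EReal.coe_toReal hv (hf_ne_bot v), ← EReal.coe_add, EReal.coe_le_coe_iff] at hbv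
      -- hbv : b ≤ s + ‖v‖^2/(2*c)
      have h1 : ‖u‖ - ‖v‖ ≤ ‖u - v‖ := norm_sub_norm_le u v
      have h2 : ‖v‖ - ‖u‖ ≤ ‖u - v‖ := by
        rw [norm_sub_rev]; exact norm_sub_norm_le v u
      have hd0 : 0 ≤ ‖u - v‖ := norm_nonneg _
      have hsq : ‖u‖^2 - 2*‖u‖*‖v‖ + ‖v‖^2 ≤ ‖u - v‖^2 := by nlinarith
      set C : ℝ := (A*‖u‖)^2/(A-B) with hC
      have hCe : C * (A-B) = (A*‖u‖)^2 := div_mul_cancel₀ _ (ne_of_gt hABpos)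
      have hAv : ‖u - v‖^2/(2*r) = A * ‖u - v‖^2 := by rw [hA]; ring
      have hBv : ‖v‖^2/(2*c) = B * ‖v‖^2 := by rw [hB]; ring
      rw [hAv]
      rw [hBv] at hbv
      have hApos : 0 < A := by rw [hA]; positivity
      have h3 : 0 ≤ (A-B) * ((A-B)*‖v‖^2 + C - 2*A*‖u‖*‖v‖) := by
        nlinarith [sq_nonneg ((A-B)*‖v‖ - A*‖u‖), hCe]
      have h4 : 0 ≤ (A-B)*‖v‖^2 + C - 2*A*‖u‖*‖v‖ :=
        nonneg_of_mul_nonneg_right h3 hABpos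
      nlinarith [h4, mul_le_mul_of_nonneg_left hsq hApos.le, hbv]
  have hne_bot : ∀ u, e u ≠ ⊥ := by
    intro u
    refine ne_bot_of_le_ne_bot (EReal.coe_ne_bot (b + A*‖u‖^2 - (A*‖u‖)^2/(A-B))) ?_
    rw [he_def]; unfold moreauEnv
    exact le_iInf fun v => key u v
  have hne_top : ∀ u, e u ≠ ⊤ := by
    intro u
    refine ne_top_of_le_ne_top ?_ (hle u z)
    rw [← EReal.coe_toReal hz (hf_ne_bot z), ← EReal.coe_add]
    exact EReal.coe_ne_top _
  set E : EuclideanSpace ℝ (Fin n) → ℝ := fun u => (e u).toReal with hE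
  have heE : ∀ u, e u = (E u : EReal) := fun u =>
    (EReal.coe_toReal (hne_top u) (hne_bot u)).symm
  have hEle : ∀ u v, f v ≠ ⊤ → E u ≤ ‖u - v‖^2/(2*r) + (f v).toReal := by
    intro u v hv
    have h := hle u v
    rw [heE u, ← EReal.coe_toReal hv (hf_ne_bot v), ← EReal.coe_add, EReal.coe_le_coe_iff] at h
    -- careful: the rewrite of f v changes its toReal?  it shouldn't since toReal ∘ coe = id
    exact_mod_cast h
  -- key concavity-type estimate
  have hBineq : ∀ t : ℝ, 0 ≤ t → t ≤ 1 → ∀ u v,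
      (1-t)*E u + t*E v - t*(1-t)*(‖v-u‖^2/(2*r)) ≤ E (u + t•(v-u)) := by
    intro t ht0 ht1 u v
    have hco : (((1-t)*E u + t*E v - t*(1-t)*(‖v-u‖^2/(2*r)) : ℝ) : EReal) ≤ e (u + t•(v-u)) := by
      rw [he_def]; unfold moreauEnv
      refine le_iInf fun p => ?_
      rcases eq_or_ne (f p) ⊤ with hp | hp
      · rw [hp, EReal.add_top_of_ne_bot (EReal.coe_ne_bot _)]; exact le_top
      · rw [← EReal.coe_toReal hp (hf_ne_bot p), ← EReal.coe_add, EReal.coe_le_coe_iff]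
        set s := (f p).toReal with hs
        have h1 : E u ≤ ‖u - p‖^2/(2*r) + s := hEle u p hp
        have h2 : E v ≤ ‖v - p‖^2/(2*r) + s := hEle v p hp
        have hid := norm_combo (u-p) (v-p) t
        have hvp : (v-p) - (u-p) = v - u := by abel
        rw [hvp] at hid
        have hpt : u + t•(v-u) - p = (u-p) + t•(v-u) := by abel
        rw [hpt, hid]
        have e1 : ((1-t)*‖u-p‖^2 + t*‖v-p‖^2 - t*(1-t)*‖v-u‖^2)/(2*r)
            = (1-t)*(‖u-p‖^2/(2*r)) + t*(‖v-p‖^2/(2*r)) - t*(1-t)*(‖v-u‖^2/(2*r)) := by ring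
        rw [e1]
        nlinarith [mul_le_mul_of_nonneg_left h1 (by linarith : (0:ℝ) ≤ 1 - t),
          mul_le_mul_of_nonneg_left h2 ht0]
    rw [heE] at hco
    exact_mod_cast hco
  -- concavity of E - ‖·‖²/(2r)
  have hg : ConcaveOn ℝ (univ : Set (EuclideanSpace ℝ (Fin n)))
      (fun u => E u - ‖u‖^2/(2*r)) := by
    refine ⟨convex_univ, fun u _ v _ a t ha ht hat => ?_⟩
    simp only [smul_eq_mul]
    have ha' : a = 1 - t := by linarith
    have hcomb : a•u + t•v = u + t•(v-u) := by rw [ha']; module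
    rw [hcomb, ha']
    have hBB := hBineq t ht (by linarith) u v
    have hid := norm_combo u v t
    rw [hid]
    have e1 : ((1-t)*‖u‖^2 + t*‖v‖^2 - t*(1-t)*‖v-u‖^2)/(2*r)
        = (1-t)*(‖u‖^2/(2*r)) + t*(‖v‖^2/(2*r)) - t*(1-t)*(‖v-u‖^2/(2*r)) := by ring
    rw [e1]
    nlinarith [hBB]
  have hEc : Continuous E := by
    have hgc : Continuous (fun u : EuclideanSpace ℝ (Fin n) => E u - ‖u‖^2/(2*r)) :=
      continuousOn_univ.1 (hg.continuousOn isOpen_univ)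
    have hq : Continuous fun u : EuclideanSpace ℝ (Fin n) => ‖u‖^2/(2*r) :=
      (continuous_norm.pow 2).div_const _
    have : E = fun u => (E u - ‖u‖^2/(2*r)) + ‖u‖^2/(2*r) := by funext u; ring
    rw [this]
    exact hgc.add hq
  -- the subderivative bound
  set c0 : ℝ := E y - E x - ‖y - x‖^2/(2*r) with hc0
  have hsub : (c0 : EReal) ≤ subderiv e x (y - x) := by
    have hVU : ∀ᶠ p : ℝ × EuclideanSpace ℝ (Fin n) in (𝓝[>] (0:ℝ)) ×ˢ 𝓝 (y-x),
        ((E (x + p.2) - E x - ‖p.2‖^2/(2*r) : ℝ) : EReal)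
          ≤ ((p.1⁻¹ : ℝ) : EReal) * (e (x + p.1 • p.2) - e x) := by
      filter_upwards [prod_mem_prod (Ioo_mem_nhdsGT_of_mem (left_mem_Ico.2 one_pos))
        (univ_mem : (univ : Set (EuclideanSpace ℝ (Fin n))) ∈ 𝓝 (y-x))] with p hp
      obtain ⟨⟨ht0, ht1⟩, -⟩ := hp
      rw [heE (x + p.1 • p.2), heE x, ← EReal.coe_sub, ← EReal.coe_mul, EReal.coe_le_coe_iff]
      have hBB := hBineq p.1 ht0.le ht1.le x (x + p.2)
      have hs1 : x + p.2 - x = p.2 := add_sub_cancel_left x p.2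
      rw [hs1] at hBB
      have hKnn : 0 ≤ ‖p.2‖^2/(2*r) := by positivity
      rw [inv_mul_eq_div, le_div_iff₀ ht0]
      nlinarith [hBB, mul_nonneg (mul_nonneg ht0.le ht0.le) hKnn]
    have hVt : Tendsto (fun p : ℝ × EuclideanSpace ℝ (Fin n) =>
        ((E (x + p.2) - E x - ‖p.2‖^2/(2*r) : ℝ) : EReal))
        ((𝓝[>] (0:ℝ)) ×ˢ 𝓝 (y-x)) (𝓝 (c0 : EReal)) := by
      apply EReal.tendsto_coe.2
      have hcont : Continuous fun v : EuclideanSpace ℝ (Fin n) =>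
          E (x + v) - E x - ‖v‖^2/(2*r) :=
        ((hEc.comp (continuous_const.add continuous_id)).sub continuous_const).sub
          ((continuous_norm.pow 2).div_const _)
      have h5 : x + (y - x) = y := by abel
      have h6 := (hcont.tendsto (y-x)).comp
        (tendsto_snd : Tendsto Prod.snd ((𝓝[>] (0:ℝ)) ×ˢ 𝓝 (y-x)) _)
      simpa [Function.comp_def, h5, hc0] using h6
    unfold subderiv
    calc (c0 : EReal) = liminf (fun p : ℝ × EuclideanSpace ℝ (Fin n) =>
          ((E (x + p.2) - E x - ‖p.2‖^2/(2*r) : ℝ) : EReal)) ((𝓝[>] (0:ℝ)) ×ˢ 𝓝 (y-x)) :=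
        (hVt.liminf_eq).symm
      _ ≤ _ := liminf_le_liminf hVU
  rw [heE y, heE x]
  have hfin : (E y : EReal) = (E x : EReal) + (c0 : EReal) + ((1/(2*r))*‖y-x‖^2 : ℝ) := by
    rw [← EReal.coe_add, ← EReal.coe_add]
    norm_cast
    rw [hc0]; ring
  rw [hfin]
  exact add_le_add_left (add_le_add_right hsub _) _
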